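/- Fix M ≥ 0. There exists a constant C > 0, depending only on M, such that for all nonzero ξ, η ∈ ℝ² and each fixed sign s ∈ {+, −}, the 2×2 matrix product satisfies ‖Π^M_s(ξ)·Π^M_s(η)‖ ≤ C·(∠(−ξ, η) + ⟨ξ⟩^{-1} + ⟨η⟩^{-1}), where ‖·‖ denotes the operator norm on ℂ² and ⟨ξ⟩ = √(1 + |ξ|²). -/

import Mathlib

noncomputable section

set_option maxHeartbeats 1000000
set_option synthInstance.maxHeartbeats 400000

/-- ℝ² as a Euclidean space. -/
abbrev E2 := EuclideanSpace ℝ (Fin 2)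

/-- The Japanese bracket `⟨ξ⟩_M = √(M² + |ξ|²)`. -/
def jb (M : ℝ) (ξ : E2) : ℝ := Real.sqrt (M ^ 2 + ‖ξ‖ ^ 2)

/-- The Pauli matrix σ¹. -/
def σ1 : Matrix (Fin 2) (Fin 2) ℂ := !![0, 1; 1, 0]

/-- The Pauli matrix σ². -/
def σ2 : Matrix (Fin 2) (Fin 2) ℂ := !![0, -Complex.I; Complex.I, 0]

/-- The Dirac matrix γ⁰. -/
def γ0 : Matrix (Fin 2) (Fin 2) ℂ := !![1, 0; 0, -1]

/-- The projection `Π^M_s(ξ) = (1/2)[I + s·⟨ξ⟩_M⁻¹(ξ₁σ¹ + ξ₂σ² + Mγ⁰)]`, `s = ±1`. -/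
def PiM (M s : ℝ) (ξ : E2) : Matrix (Fin 2) (Fin 2) ℂ :=
  (2 : ℂ)⁻¹ • (1 + ((s / jb M ξ : ℝ) : ℂ) •
    (((ξ 0 : ℝ) : ℂ) • σ1 + ((ξ 1 : ℝ) : ℂ) • σ2 + ((M : ℝ) : ℂ) • γ0))

/-- The operator norm on ℂ² of a 2×2 complex matrix. -/
def opNorm (A : Matrix (Fin 2) (Fin 2) ℂ) : ℝ := ‖Matrix.toEuclideanCLM (𝕜 := ℂ) A‖

namespace Stmt5Aux

open scoped Matrix.Norms.L2Operator
open Matrix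

/-! ### Matrix algebra facts -/

lemma matsq (a b m : ℝ) :
    (((a:ℂ)) • σ1 + ((b:ℂ)) • σ2 + ((m:ℂ)) • γ0) * (((a:ℂ)) • σ1 + ((b:ℂ)) • σ2 + ((m:ℂ)) • γ0)
      = (((a^2+b^2+m^2 : ℝ)):ℂ) • 1 := by
  ext i j
  fin_cases i <;> fin_cases j <;>
    simp [σ1, σ2, γ0, Matrix.mul_apply, Fin.sum_univ_two, Matrix.one_apply, Complex.ext_iff]
  all_goals try simp [pow_two, Complex.mul_re, Complex.mul_im]
  all_goals try constructor
  all_goals try ring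

lemma mherm (a b m : ℝ) :
    (((a:ℂ)) • σ1 + ((b:ℂ)) • σ2 + ((m:ℂ)) • γ0)ᴴ
      = (((a:ℂ)) • σ1 + ((b:ℂ)) • σ2 + ((m:ℂ)) • γ0) := by
  ext i j
  fin_cases i <;> fin_cases j <;>
    simp [σ1, σ2, γ0, Matrix.conjTranspose_apply]

/-! ### Operator norm facts -/

lemma opNorm_eq (A : Matrix (Fin 2) (Fin 2) ℂ) : opNorm A = ‖A‖ := (Matrix.cstar_norm_def A).symm

lemma opNorm_nonneg' (A : Matrix (Fin 2) (Fin 2) ℂ) : 0 ≤ opNorm A := norm_nonneg _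

lemma opNorm_mul_le (A B : Matrix (Fin 2) (Fin 2) ℂ) : opNorm (A * B) ≤ opNorm A * opNorm B := by
  rw [opNorm_eq, opNorm_eq, opNorm_eq]; exact Matrix.l2_opNorm_mul A B

lemma opNorm_add_le (A B : Matrix (Fin 2) (Fin 2) ℂ) : opNorm (A + B) ≤ opNorm A + opNorm B := by
  rw [opNorm_eq, opNorm_eq, opNorm_eq]; exact norm_add_le A B

lemma opNorm_smul (c : ℂ) (A : Matrix (Fin 2) (Fin 2) ℂ) : opNorm (c • A) = ‖c‖ * opNorm A := by
  rw [opNorm_eq, opNorm_eq]; exact norm_smul c A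

lemma opNorm_one : opNorm 1 = 1 := by
  unfold opNorm; rw [_root_.map_one]; exact norm_one

lemma opNorm_eq_sqrt {A : Matrix (Fin 2) (Fin 2) ℂ} {r : ℝ} (hherm : Aᴴ = A)
    (hsq : A * A = ((r : ℝ) : ℂ) • 1) (hr : 0 ≤ r) : opNorm A = Real.sqrt r := by
  have h2 : ‖A‖ * ‖A‖ = r := by
    rw [← Matrix.l2_opNorm_conjTranspose_mul_self, hherm, hsq, norm_smul, Complex.norm_real,
      Real.norm_eq_abs, abs_of_nonneg hr, ← opNorm_eq, opNorm_one, mul_one]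
  rw [opNorm_eq, ← Real.sqrt_mul_self (norm_nonneg A), h2]

/-! ### Scalar facts -/

lemma norm_sq_E2 (ξ : E2) : ‖ξ‖^2 = (ξ 0)^2 + (ξ 1)^2 := by
  rw [EuclideanSpace.norm_eq, Real.sq_sqrt (by positivity)]
  simp [Fin.sum_univ_two, Real.norm_eq_abs, sq_abs]

lemma jb_pos {M : ℝ} (ξ : E2) (hξ : ξ ≠ 0) : 0 < jb M ξ := by
  have : 0 < ‖ξ‖ := norm_pos_iff.mpr hξ
  apply Real.sqrt_pos.mpr; positivity

lemma jb_sq {M : ℝ} (ξ : E2) : (jb M ξ)^2 = M^2 + ‖ξ‖^2 := by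
  rw [jb, Real.sq_sqrt (by positivity)]

lemma norm_le_jb {M : ℝ} (ξ : E2) : ‖ξ‖ ≤ jb M ξ := by
  rw [jb]
  calc ‖ξ‖ = Real.sqrt (‖ξ‖^2) := (Real.sqrt_sq (norm_nonneg ξ)).symm
  _ ≤ Real.sqrt (M^2 + ‖ξ‖^2) := Real.sqrt_le_sqrt (by nlinarith [sq_nonneg M])

lemma M_le_jb {M : ℝ} (hM : 0 ≤ M) (ξ : E2) : M ≤ jb M ξ := by
  rw [jb]
  calc M = Real.sqrt (M^2) := (Real.sqrt_sq hM).symm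
  _ ≤ Real.sqrt (M^2 + ‖ξ‖^2) := Real.sqrt_le_sqrt (by nlinarith [sq_nonneg ‖ξ‖])

lemma scalar_est' {x q M : ℝ} (hx : 0 ≤ x) (hq0 : 0 ≤ q) (hq1 : q ≤ 1)
    (hqx : q * x ≤ 1 + M) (hM : 0 ≤ M) :
    q * Real.sqrt (1 + x^2) ≤ 2 + M := by
  have h1 : Real.sqrt (1 + x^2) ≤ 1 + x := by
    calc Real.sqrt (1 + x^2) ≤ Real.sqrt ((1+x)^2) := Real.sqrt_le_sqrt (by nlinarith)
    _ = 1 + x := Real.sqrt_sq (by linarith)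
  calc q * Real.sqrt (1 + x^2) ≤ q * (1+x) := by
        apply mul_le_mul_of_nonneg_left h1 hq0
  _ = q + q*x := by ring
  _ ≤ 1 + (1 + M) := by linarith
  _ = 2 + M := by ring

/-! ### Geometric estimates -/

open InnerProductGeometry in
lemma chord (ξ η : E2) (hξ : ξ ≠ 0) (hη : η ≠ 0) :
    ‖‖ξ‖⁻¹ • ξ + ‖η‖⁻¹ • η‖ ≤ angle (-ξ) η := by
  have hξn : ‖ξ‖ ≠ 0 := norm_ne_zero_iff.mpr hξ
  have hηn : ‖η‖ ≠ 0 := norm_ne_zero_iff.mpr hη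
  set p : E2 := ‖ξ‖⁻¹ • ξ with hp'
  set q : E2 := ‖η‖⁻¹ • η with hq'
  set t := angle (-ξ) η with ht'
  have hp : ‖p‖ = 1 := norm_smul_inv_norm hξ
  have hq : ‖q‖ = 1 := norm_smul_inv_norm hη
  have hcos : Real.cos t * (‖(-ξ)‖ * ‖η‖) = inner ℝ (-ξ) η :=
    cos_angle_mul_norm_mul_norm (-ξ) η
  rw [norm_neg, inner_neg_left] at hcos
  have hips : inner ℝ p q = - Real.cos t := by
    rw [hp', hq', real_inner_smul_left, real_inner_smul_right]
    have h1 : inner ℝ ξ η = - (Real.cos t * (‖ξ‖ * ‖η‖)) := by linarith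
    rw [h1]
    field_simp
  have hnorm : ‖p + q‖^2 = 2 - 2 * Real.cos t := by
    rw [norm_add_sq_real, hp, hq, hips]; ring
  have hc : 1 - t^2/2 ≤ Real.cos t := Real.one_sub_sq_div_two_le_cos
  have ht0 : 0 ≤ t := angle_nonneg _ _
  nlinarith [norm_nonneg (p + q), sq_nonneg (‖p + q‖ - t), sq_nonneg (‖p + q‖ + t)]

open InnerProductGeometry in
lemma vec_est (ξ η : E2) (hξ : ξ ≠ 0) (hη : η ≠ 0) (a b : ℝ) (ha0 : 0 ≤ a) (hb0 : 0 ≤ b)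
    (ha1 : a * ‖ξ‖ ≤ 1) (hb1 : b * ‖η‖ ≤ 1) :
    ‖a • ξ + b • η‖ ≤ angle (-ξ) η + (1 - a * ‖ξ‖) + (1 - b * ‖η‖) := by
  have hξn : ‖ξ‖ ≠ 0 := norm_ne_zero_iff.mpr hξ
  have hηn : ‖η‖ ≠ 0 := norm_ne_zero_iff.mpr hη
  set p : E2 := ‖ξ‖⁻¹ • ξ with hp'
  set q : E2 := ‖η‖⁻¹ • η with hq'
  have hq : ‖q‖ = 1 := norm_smul_inv_norm hη
  have key : a • ξ + b • η = (a * ‖ξ‖) • (p + q) + ((b * ‖η‖) - (a * ‖ξ‖)) • q := by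
    rw [hp', hq']
    match_scalars <;> field_simp <;> ring
  have h1 : ‖a • ξ + b • η‖ ≤ (a * ‖ξ‖) * ‖p + q‖ + |b * ‖η‖ - a * ‖ξ‖| := by
    rw [key]
    calc ‖(a * ‖ξ‖) • (p + q) + ((b * ‖η‖) - (a * ‖ξ‖)) • q‖
        ≤ ‖(a * ‖ξ‖) • (p + q)‖ + ‖((b * ‖η‖) - (a * ‖ξ‖)) • q‖ := norm_add_le _ _
      _ = (a * ‖ξ‖) * ‖p + q‖ + |b * ‖η‖ - a * ‖ξ‖| := by
          rw [norm_smul, norm_smul, hq, mul_one, Real.norm_eq_abs, Real.norm_eq_abs,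
            abs_of_nonneg (by positivity)]
  have h2 : ‖p + q‖ ≤ angle (-ξ) η := chord ξ η hξ hη
  have h3 : (a * ‖ξ‖) * ‖p + q‖ ≤ ‖p + q‖ := by
    nlinarith [norm_nonneg (p + q), mul_nonneg ha0 (norm_nonneg ξ)]
  have h4 : |b * ‖η‖ - a * ‖ξ‖| ≤ (1 - a * ‖ξ‖) + (1 - b * ‖η‖) := by
    rcases abs_cases (b * ‖η‖ - a * ‖ξ‖) with ⟨h, _⟩ | ⟨h, _⟩ <;>
      · rw [h]
        nlinarith [mul_nonneg ha0 (norm_nonneg ξ), mul_nonneg hb0 (norm_nonneg η)]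
  linarith

/-- The main scalar bound. -/
lemma key_scalar {M : ℝ} (hM : 0 ≤ M) (ζ : E2) (hζ : ζ ≠ 0) :
    (1 - (jb M ζ)⁻¹ * ‖ζ‖) + M / jb M ζ ≤ 2 * (2 + M) * (jb 1 ζ)⁻¹ := by
  set g := jb M ζ with hg'
  have hg : 0 < g := jb_pos ζ hζ
  have hg2 : g^2 = M^2 + ‖ζ‖^2 := jb_sq ζ
  have hnζ : ‖ζ‖ ≤ g := norm_le_jb ζ
  have hMζ : M ≤ g := M_le_jb hM ζ
  set x := ‖ζ‖ with hx'
  have hx0 : 0 ≤ x := norm_nonneg ζ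
  have hq1a : 0 ≤ 1 - g⁻¹ * x := by
    rw [sub_nonneg, inv_mul_le_iff₀ hg, mul_one]; exact hnζ
  have hq1b : 1 - g⁻¹ * x ≤ 1 := by
    have : 0 ≤ g⁻¹ * x := by positivity
    linarith
  have hq1c : (1 - g⁻¹ * x) * x ≤ 1 + M := by
    rw [← mul_le_mul_iff_left₀ hg]
    have e : (1 - g⁻¹ * x) * x * g = x * g - x^2 := by
      field_simp
    rw [e]
    nlinarith [mul_nonneg (sub_nonneg.mpr hnζ) hg.le, mul_le_mul_of_nonneg_left hMζ hM]
  have hq2a : 0 ≤ M / g := by positivity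
  have hq2b : M / g ≤ 1 := by
    rw [div_le_one hg]; exact hMζ
  have hq2c : (M / g) * x ≤ 1 + M := by
    rw [← mul_le_mul_iff_left₀ hg]
    have e : M / g * x * g = M * x := by field_simp
    rw [e]
    nlinarith [mul_le_mul_of_nonneg_left hnζ hM]
  have h1 := scalar_est' hx0 hq1a hq1b hq1c hM
  have h2 := scalar_est' hx0 hq2a hq2b hq2c hM
  have hj : jb 1 ζ = Real.sqrt (1 + x^2) := by rw [jb, one_pow]
  have hjpos : 0 < jb 1 ζ := by rw [hj]; positivity
  rw [← hj] at h1 h2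
  rw [show 2 * (2 + M) * (jb 1 ζ)⁻¹ = ((2+M) + (2+M)) / jb 1 ζ by ring, le_div_iff₀ hjpos]
  have e : ((1 - g⁻¹ * x) + M / g) * jb 1 ζ = (1 - g⁻¹ * x) * jb 1 ζ + (M / g) * jb 1 ζ := by ring
  rw [e]
  linarith

end Stmt5Aux

open Stmt5Aux InnerProductGeometry

theorem stmt5 (M : ℝ) (hM : 0 ≤ M) :
    ∃ C : ℝ, 0 < C ∧ ∀ (s : ℝ), (s = 1 ∨ s = -1) → ∀ (ξ η : E2), ξ ≠ 0 → η ≠ 0 →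
      opNorm (PiM M s ξ * PiM M s η) ≤
        C * (InnerProductGeometry.angle (-ξ) η + (jb 1 ξ)⁻¹ + (jb 1 η)⁻¹) := by
  refine ⟨M + 2, by linarith, ?_⟩
  intro s hs ξ η hξ hη
  have hss : s * s = 1 := by rcases hs with h | h <;> rw [h] <;> norm_num
  have habs : |s| = 1 := by rcases hs with h | h <;> rw [h] <;> norm_num
  set gξ := jb M ξ with hgξ'
  set gη := jb M η with hgη'
  have hgξ : 0 < gξ := jb_pos ξ hξ
  have hgη : 0 < gη := jb_pos η hη
  have hgξ2 : gξ^2 = M^2 + ‖ξ‖^2 := jb_sq ξ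
  have hgη2 : gη^2 = M^2 + ‖η‖^2 := jb_sq η
  have hnξ : ‖ξ‖ ≤ gξ := norm_le_jb ξ
  have hnη : ‖η‖ ≤ gη := norm_le_jb η
  have hMξ : M ≤ gξ := M_le_jb hM ξ
  have hMη : M ≤ gη := M_le_jb hM η
  set Aξ : Matrix (Fin 2) (Fin 2) ℂ :=
    ((ξ 0 : ℝ) : ℂ) • σ1 + ((ξ 1 : ℝ) : ℂ) • σ2 + ((M : ℝ) : ℂ) • γ0 with hAξ'
  set Aη : Matrix (Fin 2) (Fin 2) ℂ :=
    ((η 0 : ℝ) : ℂ) • σ1 + ((η 1 : ℝ) : ℂ) • σ2 + ((M : ℝ) : ℂ) • γ0 with hAη'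
  have hAξsq : Aξ * Aξ = ((gξ^2 : ℝ) : ℂ) • 1 := by
    rw [hAξ', matsq]
    congr 2
    rw [hgξ2, norm_sq_E2]; ring
  -- idempotency of PiM M s ξ
  set c : ℂ := ((s / gξ : ℝ) : ℂ) with hc'
  have hc2 : c * c * ((gξ^2 : ℝ) : ℂ) = 1 := by
    have hr : (s/gξ) * (s/gξ) * gξ^2 = 1 := by
      rw [div_mul_div_comm, pow_two, div_mul_cancel₀ _ (mul_ne_zero hgξ.ne' hgξ.ne'), hss]
    rw [hc', show ((s/gξ:ℝ):ℂ) * ((s/gξ:ℝ):ℂ) * ((gξ^2:ℝ):ℂ)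
        = (((s/gξ) * (s/gξ) * gξ^2 : ℝ) : ℂ) by push_cast; ring, hr]
    norm_num
  have hX2 : (c • Aξ) * (c • Aξ) = 1 := by
    rw [smul_mul_assoc, mul_smul_comm, hAξsq, smul_smul, smul_smul, hc2, one_smul]
  have hPiξ : PiM M s ξ = (2:ℂ)⁻¹ • (1 + c • Aξ) := rfl
  have hidem : PiM M s ξ * PiM M s ξ = PiM M s ξ := by
    rw [hPiξ, smul_mul_assoc, mul_smul_comm, smul_smul]
    have key : (1 + c • Aξ) * (1 + c • Aξ) = (2:ℂ) • (1 + c • Aξ) := by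
      rw [mul_add, mul_one, add_mul, one_mul, hX2]
      rw [show ((2:ℂ) • (1 + c • Aξ) : Matrix (Fin 2) (Fin 2) ℂ)
          = (1 + c • Aξ) + (1 + c • Aξ) from two_smul ℂ _]
      abel
    rw [key, smul_smul]
    norm_num
  -- opNorm (PiM M s ξ) ≤ 1
  have hAξnorm : opNorm Aξ = gξ := by
    have := opNorm_eq_sqrt (A := Aξ) (r := gξ^2) (by rw [hAξ']; exact mherm _ _ _) hAξsq (by positivity)
    rw [this, Real.sqrt_sq hgξ.le]
  have hcnorm : ‖c‖ = 1 / gξ := by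
    rw [hc', Complex.norm_real, Real.norm_eq_abs, abs_div, habs, abs_of_pos hgξ]
  have hPiξnorm : opNorm (PiM M s ξ) ≤ 1 := by
    rw [hPiξ, opNorm_smul]
    have h1 : opNorm (1 + c • Aξ) ≤ 1 + 1 := by
      calc opNorm (1 + c • Aξ) ≤ opNorm 1 + opNorm (c • Aξ) := opNorm_add_le _ _
        _ = 1 + ‖c‖ * opNorm Aξ := by rw [opNorm_one, opNorm_smul]
        _ = 1 + 1 := by rw [hcnorm, hAξnorm]; field_simp
    have h2 : ‖(2:ℂ)⁻¹‖ = 2⁻¹ := by norm_num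
    rw [h2]
    linarith [opNorm_nonneg' (1 + c • Aξ)]
  -- the difference matrix
  set c0 : ℝ := s / gη * (η 0) + s / gξ * (ξ 0) with hc0'
  set c1 : ℝ := s / gη * (η 1) + s / gξ * (ξ 1) with hc1'
  set cm : ℝ := s / gη * M + s / gξ * M with hcm'
  set D : Matrix (Fin 2) (Fin 2) ℂ :=
    (2:ℂ)⁻¹ • (((c0:ℝ):ℂ) • σ1 + ((c1:ℝ):ℂ) • σ2 + ((cm:ℝ):ℂ) • γ0) with hD'
  have hDeq : PiM M s η + PiM M s ξ - 1 = D := by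
    rw [hD', hc0', hc1', hcm']
    simp only [PiM]
    have h2 : (2:ℂ) ≠ 0 := two_ne_zero
    match_scalars <;> push_cast <;> ring
  have hprod : PiM M s ξ * PiM M s η = PiM M s ξ * D := by
    rw [← hDeq, mul_sub, mul_add, hidem, mul_one]
    abel
  -- bound on D
  have hDnorm : opNorm D = 2⁻¹ * Real.sqrt (c0^2 + c1^2 + cm^2) := by
    rw [hD', opNorm_smul]
    have h1 : opNorm (((c0:ℝ):ℂ) • σ1 + ((c1:ℝ):ℂ) • σ2 + ((cm:ℝ):ℂ) • γ0)
        = Real.sqrt (c0^2 + c1^2 + cm^2) :=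
      opNorm_eq_sqrt (mherm _ _ _) (matsq _ _ _) (by positivity)
    rw [h1]
    norm_num
  -- relate √(c0²+c1²) to the vector w
  set w : E2 := (s / gξ) • ξ + (s / gη) • η with hw'
  have hw0 : w 0 = c0 := by
    rw [hw', hc0']
    simp only [PiLp.add_apply, PiLp.smul_apply, smul_eq_mul]
    ring
  have hw1 : w 1 = c1 := by
    rw [hw', hc1']
    simp only [PiLp.add_apply, PiLp.smul_apply, smul_eq_mul]
    ring
  have hwnorm : Real.sqrt (c0^2 + c1^2) = ‖w‖ := by
    rw [← hw0, ← hw1, ← norm_sq_E2, Real.sqrt_sq (norm_nonneg w)]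
  have hws : w = s • ((gξ⁻¹) • ξ + (gη⁻¹) • η) := by
    rw [hw']
    match_scalars <;> ring
  have hwnorm2 : ‖w‖ = ‖(gξ⁻¹) • ξ + (gη⁻¹) • η‖ := by
    rw [hws, norm_smul, Real.norm_eq_abs, habs, one_mul]
  set t := InnerProductGeometry.angle (-ξ) η with ht'
  have ht0 : 0 ≤ t := InnerProductGeometry.angle_nonneg _ _
  have hvec : ‖(gξ⁻¹) • ξ + (gη⁻¹) • η‖ ≤ t + (1 - gξ⁻¹ * ‖ξ‖) + (1 - gη⁻¹ * ‖η‖) := by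
    apply vec_est ξ η hξ hη _ _ (by positivity) (by positivity)
    · rw [inv_mul_le_iff₀ hgξ, mul_one]; exact hnξ
    · rw [inv_mul_le_iff₀ hgη, mul_one]; exact hnη
  have hcm : |cm| ≤ M / gξ + M / gη := by
    rw [hcm', show s / gη * M + s / gξ * M = s * (M / gη + M / gξ) by ring, abs_mul, habs,
      one_mul, abs_of_nonneg (by positivity)]
    linarith
  have hsplit : Real.sqrt (c0^2 + c1^2 + cm^2) ≤ Real.sqrt (c0^2 + c1^2) + |cm| := by
    have h1 : Real.sqrt (c0^2 + c1^2 + cm^2)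
        ≤ Real.sqrt ((Real.sqrt (c0^2 + c1^2) + |cm|)^2) := by
      apply Real.sqrt_le_sqrt
      nlinarith [Real.sq_sqrt (show (0:ℝ) ≤ c0^2 + c1^2 by positivity),
        Real.sqrt_nonneg (c0^2 + c1^2), abs_nonneg cm, sq_abs cm]
    rwa [Real.sqrt_sq (by positivity)] at h1
  have hkey : ∀ ζ : E2, ζ ≠ 0 → (1 - (jb M ζ)⁻¹ * ‖ζ‖) + M / jb M ζ ≤ 2 * (2 + M) * (jb 1 ζ)⁻¹ :=
    fun ζ hζ => key_scalar hM ζ hζ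
  -- assemble
  have step1 : opNorm (PiM M s ξ * PiM M s η) ≤ opNorm D := by
    rw [hprod]
    calc opNorm (PiM M s ξ * D) ≤ opNorm (PiM M s ξ) * opNorm D := opNorm_mul_le _ _
      _ ≤ 1 * opNorm D := by
          apply mul_le_mul_of_nonneg_right hPiξnorm (opNorm_nonneg' D)
      _ = opNorm D := one_mul _
  have step2 : opNorm D ≤ 2⁻¹ * (t + (1 - gξ⁻¹ * ‖ξ‖) + (1 - gη⁻¹ * ‖η‖) + (M / gξ + M / gη)) := by
    rw [hDnorm]
    have h1 : Real.sqrt (c0^2 + c1^2 + cm^2)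
        ≤ t + (1 - gξ⁻¹ * ‖ξ‖) + (1 - gη⁻¹ * ‖η‖) + (M / gξ + M / gη) := by
      calc Real.sqrt (c0^2 + c1^2 + cm^2) ≤ Real.sqrt (c0^2 + c1^2) + |cm| := hsplit
        _ = ‖(gξ⁻¹) • ξ + (gη⁻¹) • η‖ + |cm| := by rw [hwnorm, hwnorm2]
        _ ≤ (t + (1 - gξ⁻¹ * ‖ξ‖) + (1 - gη⁻¹ * ‖η‖)) + (M / gξ + M / gη) := by
            exact add_le_add hvec hcm
        _ = t + (1 - gξ⁻¹ * ‖ξ‖) + (1 - gη⁻¹ * ‖η‖) + (M / gξ + M / gη) := by ring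
    linarith
  have hkξ := hkey ξ hξ
  have hkη := hkey η hη
  have hinvξ : (0:ℝ) ≤ (jb 1 ξ)⁻¹ := inv_nonneg.mpr (jb_pos ξ hξ).le
  have hinvη : (0:ℝ) ≤ (jb 1 η)⁻¹ := inv_nonneg.mpr (jb_pos η hη).le
  calc opNorm (PiM M s ξ * PiM M s η)
      ≤ 2⁻¹ * (t + (1 - gξ⁻¹ * ‖ξ‖) + (1 - gη⁻¹ * ‖η‖) + (M / gξ + M / gη)) :=
        le_trans step1 step2
    _ ≤ 2⁻¹ * t + (2 + M) * (jb 1 ξ)⁻¹ + (2 + M) * (jb 1 η)⁻¹ := by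
        have hexp : 2⁻¹ * (t + (1 - gξ⁻¹ * ‖ξ‖) + (1 - gη⁻¹ * ‖η‖) + (M / gξ + M / gη))
            = 2⁻¹ * t + 2⁻¹ * ((1 - gξ⁻¹ * ‖ξ‖) + M / gξ)
              + 2⁻¹ * ((1 - gη⁻¹ * ‖η‖) + M / gη) := by ring
        rw [hexp]
        have e1 : 2 * (2 + M) * (jb 1 ξ)⁻¹ = 2 * ((2 + M) * (jb 1 ξ)⁻¹) := by ring
        have e2 : 2 * (2 + M) * (jb 1 η)⁻¹ = 2 * ((2 + M) * (jb 1 η)⁻¹) := by ring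
        rw [e1] at hkξ; rw [e2] at hkη
        linarith [hkξ, hkη]
    _ ≤ (M + 2) * (t + (jb 1 ξ)⁻¹ + (jb 1 η)⁻¹) := by
        have hexp : (M + 2) * (t + (jb 1 ξ)⁻¹ + (jb 1 η)⁻¹)
            = (M + 2) * t + (2 + M) * (jb 1 ξ)⁻¹ + (2 + M) * (jb 1 η)⁻¹ := by ring
        rw [hexp]
        have h1 : 2⁻¹ * t ≤ (M + 2) * t := by
          apply mul_le_mul_of_nonneg_right _ ht0
          linarith
        linarith [h1]
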